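/- Consider the R-local streaming belief propagation algorithm (log-likelihood-ratio form, k = 2) run under StSSBM(n,2,a,b,α), and write M_{v→v'}^t for the value of the message M_{v→v'} before vertex v(t+1) arrives. If the ball B_R^n(u) is a tree, then there exist random time indices { t(v) ∈ [n] : v ∈ D_R^n(u) } such that the final output at u satisfies M_u = Bprop(u; B_R^n(u), {M_v^input = M_{v→pa(v)}^{t(v)} : v ∈ L_{B_R^n(u)}}, τ̃, α, a, b). -/

import Mathlib

open MeasureTheory Finset

noncomputable section
open scoped Classical

/-- Unordered pairs of distinct vertices, represented by ordered pairs with increasing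
coordinates: the potential edges of a graph on `Fin n`. -/
abbrev EdgeIdx (n : ℕ) := {p : Fin n × Fin n // p.1 < p.2}

variable {n : ℕ}

/-- The time (in `{1, …, n}`) at which vertex `v` arrives, given the arrival
order `σ` (`σ ⟨t-1⟩` is the vertex arriving at time `t`). -/
def arrivalTime (σ : Equiv.Perm (Fin n)) (v : Fin n) : ℕ := (σ.symm v : ℕ) + 1

/-- The graph `G(t)`: the subgraph of `G(n)` (encoded by the indicator `E` of present
edges) induced by the vertices that have arrived by time `t`. -/
def graphAt (E : EdgeIdx n → Bool) (σ : Equiv.Perm (Fin n)) (t : ℕ) :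
    SimpleGraph (Fin n) where
  Adj u v := u ≠ v ∧ arrivalTime σ u ≤ t ∧ arrivalTime σ v ≤ t ∧
    ∃ p : EdgeIdx n, E p = true ∧
      ((p.1.1 = u ∧ p.1.2 = v) ∨ (p.1.1 = v ∧ p.1.2 = u))
  symm := by
    refine ⟨?_⟩
    rintro u v ⟨h1, h2, h3, p, hp, hor⟩
    exact ⟨h1.symm, h3, h2, p, hp, hor.symm⟩
  loopless := by
    refine ⟨?_⟩
    rintro v ⟨h1, -⟩
    exact h1 rfl

/-- `V_R^t(v)`: the ball of radius `R` around `v` in the graph `G(t)`. -/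
def ballSet (E : EdgeIdx n → Bool) (σ : Equiv.Perm (Fin n)) (t R : ℕ) (v : Fin n) :
    Set (Fin n) :=
  {u | (graphAt E σ t).Reachable v u ∧ (graphAt E σ t).dist v u ≤ R}

/-- `V_R^t(v)` as a finite set. -/
def ballFinset (E : EdgeIdx n → Bool) (σ : Equiv.Perm (Fin n)) (t R : ℕ) (v : Fin n) :
    Finset (Fin n) :=
  Finset.univ.filter (· ∈ ballSet E σ t R v)

/-- The accessible vertex set `𝒱_v^t` (with locality radius `R`):
`𝒱_v^0 = {v}`, and when vertex `v(t+1) = σ ⟨t⟩` arrives, every vertex in the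
radius-`R` ball around `v(t+1)` in `G(t+1)` pools the accessible sets of all
vertices of that ball. -/
def accSet (E : EdgeIdx n → Bool) (σ : Equiv.Perm (Fin n)) (R : ℕ) :
    ℕ → Fin n → Set (Fin n)
  | 0, v => {v}
  | t + 1, v =>
    if h : t < n then
      if v ∈ ballSet E σ (t + 1) R (σ ⟨t, h⟩) then
        ⋃ v' ∈ ballSet E σ (t + 1) R (σ ⟨t, h⟩), accSet E σ R t v'
      else accSet E σ R t v
    else accSet E σ R t v

/-- A full configuration of the streaming SBM with side information:
true labels, noisy labels, edge indicators, and the arrival order. -/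
abbrev ConfigS (n k : ℕ) :=
  (Fin n → Fin k) × (Fin n → Fin k) × (EdgeIdx n → Bool) × Equiv.Perm (Fin n)

/-- A configuration of the streaming SBM without side information. -/
abbrev Config (n k : ℕ) :=
  (Fin n → Fin k) × (EdgeIdx n → Bool) × Equiv.Perm (Fin n)

/-- The probability that the potential edge `p` is present, given the labels:
`a/n` within communities and `b/n` across. -/
def edgeP (k : ℕ) (a b : ℝ) (τ : Fin n → Fin k) (p : EdgeIdx n) : ℝ :=
  if τ p.1.1 = τ p.1.2 then a / n else b / n

/-- The probability mass of a configuration of `StSSBM(n,k,a,b,α)`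
(with side information). -/
def densityS (k : ℕ) (a b α : ℝ) (c : ConfigS n k) : ℝ :=
  ((1 : ℝ) / (k : ℝ) ^ n) * ((1 : ℝ) / (Nat.factorial n : ℝ)) *
    (∏ v : Fin n, if c.2.1 v = c.1 v then 1 - α else α / ((k : ℝ) - 1)) *
    (∏ p : EdgeIdx n,
      if c.2.2.1 p then edgeP k a b c.1 p else 1 - edgeP k a b c.1 p)

/-- The probability mass of a configuration of `StSSBM(n,k,a,b)`
(no side information). -/
def density (k : ℕ) (a b : ℝ) (c : Config n k) : ℝ :=
  ((1 : ℝ) / (k : ℝ) ^ n) * ((1 : ℝ) / (Nat.factorial n : ℝ)) *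
    ∏ p : EdgeIdx n,
      if c.2.1 p then edgeP k a b c.1 p else 1 - edgeP k a b c.1 p

end

noncomputable section
open scoped Classical

variable {n : ℕ}

/-- The belief-propagation log-likelihood-ratio update function
`F(x) = ½ log((e^{2x} a + b)/(e^{2x} b + a))`. -/
def FBP (a b x : ℝ) : ℝ :=
  (1 / 2) * Real.log ((Real.exp (2 * x) * a + b) / (Real.exp (2 * x) * b + a))

/-- The side-information field: `h₁ = ½ log((1−α)/α)` for label `1` (encoded `0 : Fin 2`)
and `h₂ = ½ log(α/(1−α))` for label `2` (encoded `1 : Fin 2`). -/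
def hSide (α : ℝ) (s : Fin 2) : ℝ :=
  if s = 0 then (1 / 2) * Real.log ((1 - α) / α) else (1 / 2) * Real.log (α / (1 - α))

/-- The BP message from `x` to `y` computed from the current messages `M` in the graph
`G(t)`: `h_{τ̃(x)} + Σ_{z ∈ ∂x ∖ {y}} F(M_{z→x})`. -/
def bpMsg (a b α : ℝ) (E : EdgeIdx n → Bool) (σ : Equiv.Perm (Fin n))
    (τ' : Fin n → Fin 2) (M : Fin n → Fin n → ℝ) (t : ℕ) (x y : Fin n) : ℝ :=
  hSide α (τ' x) +
    ∑ z ∈ Finset.univ.filter (fun z => (graphAt E σ t).Adj x z ∧ z ≠ y),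
      FBP a b (M z x)

/-- Step 1 of the arrival of vertex `w = v(t)`: update the messages incoming into `w`,
`M_{x→w} ← h_{τ̃(x)} + Σ_{z ∈ D₁^{t-1}(x)} F(M_{z→x})` for every neighbor `x` of `w`
in `G(t)` (no neighbor of `x` in `G(t−1)` equals `w`, so the exclusion is vacuous). -/
def stepIncoming (a b α : ℝ) (E : EdgeIdx n → Bool) (σ : Equiv.Perm (Fin n))
    (τ' : Fin n → Fin 2) (t : ℕ) (w : Fin n) (M : Fin n → Fin n → ℝ) :
    Fin n → Fin n → ℝ := fun x y =>
  if y = w ∧ (graphAt E σ t).Adj x w then bpMsg a b α E σ τ' M (t - 1) x w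
  else M x y

/-- A neighbor of `y` lying on a shortest path from `y` to `w` in `G(t)`
(an arbitrary but fixed choice). -/
def shortestNbr (E : EdgeIdx n → Bool) (σ : Equiv.Perm (Fin n)) (t : ℕ)
    (w y : Fin n) : Fin n :=
  if h : ∃ x, (graphAt E σ t).Adj y x ∧
      (graphAt E σ t).dist w x + 1 = (graphAt E σ t).dist w y then h.choose
  else y

/-- Layer `r` of the arrival of `w = v(t)`: for every vertex `y` at distance exactly `r`
from `w` in `G(t)`, update the message into `y` from its neighbor on a shortest path
towards `w`. -/
def stepLayer (a b α : ℝ) (E : EdgeIdx n → Bool) (σ : Equiv.Perm (Fin n))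
    (τ' : Fin n → Fin 2) (t r : ℕ) (w : Fin n) (M : Fin n → Fin n → ℝ) :
    Fin n → Fin n → ℝ := fun x y =>
  if (graphAt E σ t).Reachable w y ∧ (graphAt E σ t).dist w y = r ∧
      x = shortestNbr E σ t w y then
    bpMsg a b α E σ τ' M t x y
  else M x y

/-- The state of the messages after the incoming updates and the first `r` layers of
outgoing updates triggered by the arrival of `w = v(t)`. -/
def afterLayers (a b α : ℝ) (E : EdgeIdx n → Bool) (σ : Equiv.Perm (Fin n))
    (τ' : Fin n → Fin 2) (t : ℕ) (w : Fin n) (M : Fin n → Fin n → ℝ) :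
    ℕ → Fin n → Fin n → ℝ
  | 0 => stepIncoming a b α E σ τ' t w M
  | r + 1 => stepLayer a b α E σ τ' t (r + 1) w
      (afterLayers a b α E σ τ' t w M r)

/-- The message state `M^t` of streaming belief propagation with locality radius `R`
after the first `t` arrivals (i.e. just before vertex `v(t+1)` arrives). -/
def msgTraj (a b α : ℝ) (R : ℕ) (E : EdgeIdx n → Bool) (σ : Equiv.Perm (Fin n))
    (τ' : Fin n → Fin 2) : ℕ → Fin n → Fin n → ℝ
  | 0 => fun _ _ => 0
  | t + 1 =>
    if h : t < n then
      afterLayers a b α E σ τ' (t + 1) (σ ⟨t, h⟩) (msgTraj a b α R E σ τ' t) R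
    else msgTraj a b α R E σ τ' t

/-- The final vertex belief `M_u = h_{τ̃(u)} + Σ_{u' ∈ ∂u} F(M_{u'→u})` of streaming BP. -/
def streamBPBelief (a b α : ℝ) (R : ℕ) (E : EdgeIdx n → Bool)
    (σ : Equiv.Perm (Fin n)) (τ' : Fin n → Fin 2) (u : Fin n) : ℝ :=
  hSide α (τ' u) +
    ∑ z ∈ Finset.univ.filter (fun z => (graphAt E σ n).Adj u z),
      FBP a b (msgTraj a b α R E σ τ' n z u)

/-- The label estimate of streaming BP: label `1` (encoded `0`) iff `M_u ≥ 0`. -/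
def streamBPEst (a b α : ℝ) (R : ℕ) (E : EdgeIdx n → Bool)
    (σ : Equiv.Perm (Fin n)) (τ' : Fin n → Fin 2) (u : Fin n) : Fin 2 :=
  if 0 ≤ streamBPBelief a b α R E σ τ' u then 0 else 1

/-- The messages of offline BP after `s` parallel iterations on all directed edges of
`G(n)` (initialized at uniform messages, i.e. zero log-likelihood ratios). -/
def offlineMsg (a b α : ℝ) (E : EdgeIdx n → Bool) (σ : Equiv.Perm (Fin n))
    (τ' : Fin n → Fin 2) : ℕ → Fin n → Fin n → ℝ
  | 0 => fun _ _ => 0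
  | s + 1 => fun x y => bpMsg a b α E σ τ' (offlineMsg a b α E σ τ' s) n x y

/-- The vertex belief of offline BP with radius `R` (i.e. after `R − 1` parallel
iterations). -/
def offlineBPBelief (a b α : ℝ) (R : ℕ) (E : EdgeIdx n → Bool)
    (σ : Equiv.Perm (Fin n)) (τ' : Fin n → Fin 2) (u : Fin n) : ℝ :=
  hSide α (τ' u) +
    ∑ z ∈ Finset.univ.filter (fun z => (graphAt E σ n).Adj u z),
      FBP a b (offlineMsg a b α E σ τ' (R - 1) z u)

/-- The label estimate of offline BP with radius `R`. -/
def offlineBPEst (a b α : ℝ) (R : ℕ) (E : EdgeIdx n → Bool)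
    (σ : Equiv.Perm (Fin n)) (τ' : Fin n → Fin 2) (u : Fin n) : Fin 2 :=
  if 0 ≤ offlineBPBelief a b α R E σ τ' u then 0 else 1

/-- The estimation accuracy
`Q_n(𝒜) = E[max_{π ∈ 𝔖₂} (1/n) Σ_v 1{𝒜(v; G(n), τ̃) = π(τ(v))}]`
of an estimator under `StSSBM(n,2,a,b,α)`. -/
def Qacc2 (n : ℕ) (a b α : ℝ)
    (A : (EdgeIdx n → Bool) → Equiv.Perm (Fin n) → (Fin n → Fin 2) → Fin n → Fin 2) :
    ℝ :=
  ∑ c : ConfigS n 2, densityS 2 a b α c *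
    (Finset.univ.sup' ⟨Equiv.refl (Fin 2), Finset.mem_univ _⟩
      fun π : Equiv.Perm (Fin 2) =>
        (n : ℝ)⁻¹ * ∑ v : Fin n,
          if A c.2.2.1 c.2.2.2 c.2.1 v = π (c.1 v) then (1 : ℝ) else 0)

end

noncomputable section
open scoped Classical

/-- A finite rooted tree whose vertices are (some of the) vertices of `Fin n`,
given by a parent map together with a depth function certifying acyclicity. -/
structure BPTree (n : ℕ) where
  verts : Finset (Fin n)
  root : Fin n
  parent : Fin n → Fin n
  dep : Fin n → ℕ
  root_mem : root ∈ verts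
  dep_root : dep root = 0
  parent_mem : ∀ v ∈ verts, v ≠ root → parent v ∈ verts
  dep_parent : ∀ v ∈ verts, v ≠ root → dep v = dep (parent v) + 1

/-- The set of children of a vertex in a rooted tree. -/
def BPTree.children {n : ℕ} (T : BPTree n) (v : Fin n) : Finset (Fin n) :=
  T.verts.filter fun c => c ≠ T.root ∧ T.parent c = v

/-- The leaves of a rooted tree: its childless vertices. -/
def BPTree.isLeaf {n : ℕ} (T : BPTree n) (v : Fin n) : Prop :=
  v ∈ T.verts ∧ T.children v = ∅

/-- The depth of a rooted tree. -/
def BPTree.depth {n : ℕ} (T : BPTree n) : ℕ :=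
  T.verts.sup T.dep

/-- The bottom-up messages `M̃_{v→pa(v)}` of belief propagation on a rooted tree with
input beliefs `inp` at the leaves, computed with recursion fuel `f`: childless vertices
send their input belief, all other vertices send
`h_{τ̃(v)} + Σ_{c ∈ C(v)} F(M̃_{c→v})`. -/
def MtildeAux {n : ℕ} (T : BPTree n) (a b α : ℝ) (τ' : Fin n → Fin 2)
    (inp : Fin n → ℝ) : ℕ → Fin n → ℝ
  | 0, v => inp v
  | f + 1, v =>
    if T.children v = ∅ then inp v
    else hSide α (τ' v) + ∑ c ∈ T.children v, FBP a b (MtildeAux T a b α τ' inp f c)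

/-- The output of belief propagation on the rooted tree `T` with input beliefs `inp`
at the leaves (Definition of `Bprop`):
`Bprop(u; T, {M_v^input}, τ̃, α, a, b) = h_{τ̃(u)} + Σ_{u' ∈ C(u)} F(M̃_{u'→u})`,
where `u` is the root of `T`. -/
def Bprop {n : ℕ} (T : BPTree n) (a b α : ℝ) (τ' : Fin n → Fin 2)
    (inp : Fin n → ℝ) : ℝ :=
  hSide α (τ' T.root) +
    ∑ c ∈ T.children T.root, FBP a b (MtildeAux T a b α τ' inp T.verts.card c)

end

open scoped Classical in
/-! ### Auxiliary development for the main theorem -/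

noncomputable section AuxDev
open scoped Classical
open SimpleGraph

variable {n : ℕ}

lemma arrivalTime_pos (σ : Equiv.Perm (Fin n)) (v : Fin n) : 1 ≤ arrivalTime σ v :=
  Nat.succ_le_succ (Nat.zero_le _)

lemma arrivalTime_le (σ : Equiv.Perm (Fin n)) (v : Fin n) : arrivalTime σ v ≤ n :=
  (σ.symm v).isLt

lemma arrivalTime_inj {σ : Equiv.Perm (Fin n)} {v w : Fin n}
    (h : arrivalTime σ v = arrivalTime σ w) : v = w := by
  have : σ.symm v = σ.symm w := Fin.ext (Nat.succ_injective h)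
  exact σ.symm.injective this

lemma arrivalTime_sigma {σ : Equiv.Perm (Fin n)} {t : ℕ} (h : t < n) :
    arrivalTime σ (σ ⟨t, h⟩) = t + 1 := by
  simp [arrivalTime]

@[simp] lemma graphAt_adj (E : EdgeIdx n → Bool) (σ : Equiv.Perm (Fin n)) (t : ℕ)
    (x y : Fin n) :
    (graphAt E σ t).Adj x y ↔ (x ≠ y ∧ arrivalTime σ x ≤ t ∧ arrivalTime σ y ≤ t ∧
      ∃ p : EdgeIdx n, E p = true ∧
        ((p.1.1 = x ∧ p.1.2 = y) ∨ (p.1.1 = y ∧ p.1.2 = x))) := Iff.rfl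

lemma adj_graphAt_iff {E : EdgeIdx n → Bool} {σ : Equiv.Perm (Fin n)} (t : ℕ)
    {x y : Fin n} :
    (graphAt E σ t).Adj x y ↔ (graphAt E σ n).Adj x y ∧
      arrivalTime σ x ≤ t ∧ arrivalTime σ y ≤ t := by
  constructor
  · rintro ⟨h1, h2, h3, h4⟩
    exact ⟨⟨h1, arrivalTime_le σ x, arrivalTime_le σ y, h4⟩, h2, h3⟩
  · rintro ⟨⟨h1, _, _, h4⟩, h2, h3⟩
    exact ⟨h1, h2, h3, h4⟩

lemma graphAt_mono {E : EdgeIdx n → Bool} {σ : Equiv.Perm (Fin n)} {s t : ℕ}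
    (h : s ≤ t) : graphAt E σ s ≤ graphAt E σ t := by
  rintro x y ⟨h1, h2, h3, h4⟩
  exact ⟨h1, h2.trans h, h3.trans h, h4⟩

/-- Distances shrink when passing to a supergraph. -/
lemma dist_le_of_le {V : Type*} {G G' : SimpleGraph V} (hle : G ≤ G') {x y : V}
    (h : G.Reachable x y) : G'.dist x y ≤ G.dist x y := by
  obtain ⟨p, hp⟩ := h.exists_walk_length_eq_dist
  calc G'.dist x y ≤ (p.mapLe hle).length := SimpleGraph.dist_le _
    _ = p.length := Walk.length_map _ _
    _ = G.dist x y := hp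

lemma reachable_dist_triangle {V : Type*} {G : SimpleGraph V} {x y z : V}
    (h1 : G.Reachable x y) (h2 : G.Reachable y z) :
    G.dist x z ≤ G.dist x y + G.dist y z := by
  obtain ⟨p, hp⟩ := h1.exists_walk_length_eq_dist
  obtain ⟨q, hq⟩ := h2.exists_walk_length_eq_dist
  calc G.dist x z ≤ (p.append q).length := SimpleGraph.dist_le _
    _ = _ := by rw [Walk.length_append, hp, hq]

lemma dist_add_dist_le_of_mem_support {V : Type*} {G : SimpleGraph V} {x y z : V}
    (p : G.Walk x y) (hz : z ∈ p.support) :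
    G.dist x z + G.dist z y ≤ p.length := by
  have h := congrArg Walk.length (p.take_spec hz)
  rw [Walk.length_append] at h
  calc G.dist x z + G.dist z y ≤ (p.takeUntil z hz).length + (p.dropUntil z hz).length :=
        add_le_add (SimpleGraph.dist_le _) (SimpleGraph.dist_le _)
    _ = p.length := h

/-- Lift a walk whose support lies in `B` to the induced subgraph on `B`. -/
def liftWalk {V : Type*} {G : SimpleGraph V} {B : Set V} :
    ∀ {x y : V} (p : G.Walk x y), (∀ z ∈ p.support, z ∈ B) → (hx : x ∈ B) → (hy : y ∈ B) →
      (G.induce B).Walk ⟨x, hx⟩ ⟨y, hy⟩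
  | _, _, SimpleGraph.Walk.nil, _, _, _ => SimpleGraph.Walk.nil
  | x, y, SimpleGraph.Walk.cons (v := m) h p, hs, hx, hy =>
      SimpleGraph.Walk.cons
        (by exact h : (G.induce B).Adj ⟨x, hx⟩ ⟨m, hs m (by simp [Walk.support_cons])⟩)
        (liftWalk p (fun z hz => hs z (by simp [Walk.support_cons, hz])) _ hy)

lemma liftWalk_map {V : Type*} {G : SimpleGraph V} {B : Set V} :
    ∀ {x y : V} (p : G.Walk x y) (hs : ∀ z ∈ p.support, z ∈ B) (hx : x ∈ B) (hy : y ∈ B),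
      (liftWalk p hs hx hy).map (SimpleGraph.Embedding.induce B).toHom = p
  | _, _, SimpleGraph.Walk.nil, _, _, _ => rfl
  | x, y, SimpleGraph.Walk.cons (v := m) h p, hs, hx, hy => by
      simp only [liftWalk, Walk.map_cons]
      exact congrArg (Walk.cons h) (liftWalk_map p (fun z hz => hs z (by simp [Walk.support_cons, hz]))
        (hs m (by simp [Walk.support_cons])) hy)

/-- In a graph whose induced subgraph on `B` is acyclic, paths with support inside `B`
are unique. -/
lemma walk_unique_in_ball {V : Type*} {G : SimpleGraph V} {B : Set V}
    (hac : (G.induce B).IsAcyclic) {x y : V} (p q : G.Walk x y)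
    (hp : p.IsPath) (hq : q.IsPath)
    (hps : ∀ z ∈ p.support, z ∈ B) (hqs : ∀ z ∈ q.support, z ∈ B) : p = q := by
  have hx : x ∈ B := hps x p.start_mem_support
  have hy : y ∈ B := hps y p.end_mem_support
  have hp' : (liftWalk p hps hx hy).IsPath := by
    apply Walk.IsPath.of_map (f := (SimpleGraph.Embedding.induce B).toHom)
    rw [liftWalk_map]; exact hp
  have hq' : (liftWalk q hqs hx hy).IsPath := by
    apply Walk.IsPath.of_map (f := (SimpleGraph.Embedding.induce B).toHom)
    rw [liftWalk_map]; exact hq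
  have := SimpleGraph.isAcyclic_iff_path_unique.mp hac ⟨_, hp'⟩ ⟨_, hq'⟩
  have h2 : liftWalk p hps hx hy = liftWalk q hqs hx hy := congrArg Subtype.val this
  have e1 := liftWalk_map p hps hx hy
  rw [h2] at e1
  exact e1.symm.trans (liftWalk_map q hqs hx hy)

/-- Every vertex at positive distance from `w` has a neighbour strictly closer to `w`. -/
lemma exists_closer {V : Type*} {G : SimpleGraph V} {w y : V}
    (h : G.Reachable w y) (hne : w ≠ y) :
    ∃ x, G.Adj y x ∧ G.dist w x + 1 = G.dist w y := by
  obtain ⟨p, hp⟩ := h.exists_walk_length_eq_dist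
  have hd : 1 ≤ G.dist w y := h.pos_dist_of_ne hne
  cases hrev : p.reverse with
  | nil =>
      exact absurd rfl hne
  | @cons _ m _ hadj q =>
      refine ⟨m, hadj, ?_⟩
      have hlen := congrArg Walk.length hrev
      rw [Walk.length_reverse, hp, Walk.length_cons] at hlen
      have h1 : G.dist w m ≤ q.length := by
        have := SimpleGraph.dist_le q.reverse
        rwa [Walk.length_reverse] at this
      have h2 : G.dist w y ≤ G.dist w m + 1 := by
        have hr1 : G.Reachable w m := ⟨q.reverse⟩
        have hr2 : G.Reachable m y := hadj.symm.reachable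
        have := reachable_dist_triangle hr1 hr2
        have hle : G.dist m y ≤ 1 := by
          have := SimpleGraph.dist_le (Walk.cons hadj.symm Walk.nil : G.Walk m y)
          simpa using this
        omega
      omega


section Geometry
variable {n : ℕ}

@[simp] lemma mem_ballSet {E : EdgeIdx n → Bool} {σ : Equiv.Perm (Fin n)} {t R : ℕ}
    {v x : Fin n} :
    x ∈ ballSet E σ t R v ↔
      (graphAt E σ t).Reachable v x ∧ (graphAt E σ t).dist v x ≤ R := Iff.rfl

@[simp] lemma mem_ballFinset {E : EdgeIdx n → Bool} {σ : Equiv.Perm (Fin n)} {t R : ℕ}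
    {v x : Fin n} :
    x ∈ ballFinset E σ t R v ↔ x ∈ ballSet E σ t R v := by
  simp [ballFinset]

variable (E : EdgeIdx n → Bool) (σ : Equiv.Perm (Fin n)) (R : ℕ) (u : Fin n)

/-- The parent of `v` in the ball around `u`: a neighbour strictly closer to `u`. -/
def paNbr (v : Fin n) : Fin n :=
  if h : ∃ p, (graphAt E σ n).Adj p v ∧
      (graphAt E σ n).dist u p + 1 = (graphAt E σ n).dist u v
  then h.choose else v

variable {E σ u}

lemma paNbr_spec {v : Fin n} (hr : (graphAt E σ n).Reachable u v) (hne : v ≠ u) :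
    (graphAt E σ n).Adj (paNbr E σ u v) v ∧
      (graphAt E σ n).dist u (paNbr E σ u v) + 1 = (graphAt E σ n).dist u v := by
  have h : ∃ p, (graphAt E σ n).Adj p v ∧
      (graphAt E σ n).dist u p + 1 = (graphAt E σ n).dist u v := by
    obtain ⟨x, hx1, hx2⟩ := exists_closer hr (fun h => hne h.symm)
    exact ⟨x, hx1.symm, hx2⟩
  rw [paNbr, dif_pos h]
  exact h.choose_spec

lemma paNbr_u : paNbr E σ u u = u := by
  rw [paNbr, dif_neg]
  rintro ⟨p, -, hp⟩
  rw [SimpleGraph.dist_self] at hp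
  omega

lemma support_ball {x : Fin n} (p : (graphAt E σ n).Walk u x) (hlen : p.length ≤ R) :
    ∀ z ∈ p.support, z ∈ ballSet E σ n R u := fun z hz =>
  ⟨⟨p.takeUntil z hz⟩,
    le_trans (le_trans (SimpleGraph.dist_le _) (Walk.length_takeUntil_le p hz)) hlen⟩

section WithTree
variable {R}
variable (htree : ((graphAt E σ n).induce (ballSet E σ n R u)).IsAcyclic)
include htree

/-- Uniqueness of the closer neighbour inside the tree ball. -/
lemma closer_unique {v p : Fin n} (hv : v ∈ ballSet E σ n R u) (hvu : v ≠ u)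
    (hp : (graphAt E σ n).Adj p v ∧
      (graphAt E σ n).dist u p + 1 = (graphAt E σ n).dist u v) :
    p = paNbr E σ u v := by
  obtain ⟨hr, hdR⟩ := hv
  have hq := paNbr_spec hr hvu
  set q := paNbr E σ u v
  set d := (graphAt E σ n).dist u v with hd
  have hd1 : 1 ≤ d := hr.pos_dist_of_ne (fun h => hvu h.symm)
  -- geodesics to p and q
  have hrp : (graphAt E σ n).Reachable u p := hr.trans hp.1.symm.reachable
  have hrq : (graphAt E σ n).Reachable u q := hr.trans hq.1.symm.reachable
  obtain ⟨gp, hgp, hgpl⟩ := hrp.exists_path_of_dist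
  obtain ⟨gq, hgq, hgql⟩ := hrq.exists_path_of_dist
  have hgpR : gp.length ≤ R := by rw [hgpl]; omega
  have hgqR : gq.length ≤ R := by rw [hgql]; omega
  have hvgp : v ∉ gp.support := by
    intro hmem
    have := dist_add_dist_le_of_mem_support gp hmem
    rw [hgpl] at this
    omega
  have hvgq : v ∉ gq.support := by
    intro hmem
    have := dist_add_dist_le_of_mem_support gq hmem
    rw [hgql] at this
    omega
  have W1 : (graphAt E σ n).Walk v u := Walk.cons hp.1.symm gp.reverse
  have hW1 : (Walk.cons hp.1.symm gp.reverse : (graphAt E σ n).Walk v u).IsPath := by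
    rw [Walk.cons_isPath_iff]
    exact ⟨hgp.reverse, by simpa using hvgp⟩
  have hW2 : (Walk.cons hq.1.symm gq.reverse : (graphAt E σ n).Walk v u).IsPath := by
    rw [Walk.cons_isPath_iff]
    exact ⟨hgq.reverse, by simpa using hvgq⟩
  have hsub1 : ∀ z ∈ (Walk.cons hp.1.symm gp.reverse : (graphAt E σ n).Walk v u).support,
      z ∈ ballSet E σ n R u := by
    intro z hz
    rw [Walk.support_cons] at hz
    rcases List.mem_cons.mp hz with h | h
    · subst h; exact ⟨hr, hdR⟩
    · exact support_ball R gp hgpR z (by simpa using h)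
  have hsub2 : ∀ z ∈ (Walk.cons hq.1.symm gq.reverse : (graphAt E σ n).Walk v u).support,
      z ∈ ballSet E σ n R u := by
    intro z hz
    rw [Walk.support_cons] at hz
    rcases List.mem_cons.mp hz with h | h
    · subst h; exact ⟨hr, hdR⟩
    · exact support_ball R gq hgqR z (by simpa using h)
  have heq := walk_unique_in_ball htree _ _ hW1 hW2 hsub1 hsub2
  have hsup := congrArg Walk.support heq
  rw [Walk.support_cons, Walk.support_cons, Walk.support_eq_cons gp.reverse,
    Walk.support_eq_cons gq.reverse] at hsup
  simp only [List.cons.injEq, true_and, and_true] at hsup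
  exact hsup.1

/-- Neighbours of ball vertices of depth `< R` are one level up or down. -/
lemma adj_classify {v z : Fin n} (hv : v ∈ ballSet E σ n R u)
    (hdv : (graphAt E σ n).dist u v < R) (hadj : (graphAt E σ n).Adj v z) :
    (graphAt E σ n).dist u z = (graphAt E σ n).dist u v + 1 ∨
      (graphAt E σ n).dist u z + 1 = (graphAt E σ n).dist u v := by
  obtain ⟨hr, hdR⟩ := hv
  have hrz : (graphAt E σ n).Reachable u z := hr.trans hadj.reachable
  set d := (graphAt E σ n).dist u v with hd
  set e := (graphAt E σ n).dist u z with he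
  have hub : e ≤ d + 1 := by
    have := reachable_dist_triangle hr hadj.reachable
    have h1 : (graphAt E σ n).dist v z = 1 := SimpleGraph.dist_eq_one_iff_adj.mpr hadj
    omega
  have hlb : d ≤ e + 1 := by
    have := reachable_dist_triangle hrz hadj.symm.reachable
    have h1 : (graphAt E σ n).dist z v = 1 := SimpleGraph.dist_eq_one_iff_adj.mpr hadj.symm
    omega
  have hne : e ≠ d := by
    intro hed
    by_cases hd0 : d = 0
    · have hvu : u = v := (hr.dist_eq_zero_iff).mp hd0
      have hzu : u = z := (hrz.dist_eq_zero_iff).mp (by omega)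
      exact (graphAt E σ n).loopless.irrefl u (by rw [← hvu, ← hzu] at hadj; exact hadj)
    · obtain ⟨gv, hgv, hgvl⟩ := hr.exists_path_of_dist
      obtain ⟨gz, hgz, hgzl⟩ := hrz.exists_path_of_dist
      have hzgv : z ∉ gv.support := by
        intro hmem
        have h1 := dist_add_dist_le_of_mem_support gv hmem
        have h2 : 1 ≤ (graphAt E σ n).dist z v := hrz.symm.trans hr |>.pos_dist_of_ne
          (fun h => (graphAt E σ n).loopless.irrefl v (h ▸ hadj))
        rw [hgvl] at h1
        omega
      have hW1 : (Walk.cons hadj.symm gv.reverse : (graphAt E σ n).Walk z u).IsPath := by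
        rw [Walk.cons_isPath_iff]
        exact ⟨hgv.reverse, by simpa using hzgv⟩
      have hW2 : (gz.reverse : (graphAt E σ n).Walk z u).IsPath := hgz.reverse
      have hsub1 : ∀ x ∈ (Walk.cons hadj.symm gv.reverse : (graphAt E σ n).Walk z u).support,
          x ∈ ballSet E σ n R u := by
        intro x hx
        rw [Walk.support_cons] at hx
        rcases List.mem_cons.mp hx with h | h
        · subst h; exact ⟨hrz, by omega⟩
        · exact support_ball R gv (by omega) x (by simpa using h)
      have hsub2 : ∀ x ∈ (gz.reverse : (graphAt E σ n).Walk z u).support, x ∈ ballSet E σ n R u := by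
        intro x hx
        exact support_ball R gz (by omega) x (by simpa using hx)
      have heq := walk_unique_in_ball htree _ _ hW1 hW2 hsub1 hsub2
      have hlen := congrArg Walk.length heq
      rw [Walk.length_cons, Walk.length_reverse, Walk.length_reverse, hgvl, hgzl] at hlen
      omega
  omega

end WithTree

end Geometry

section TreeDefs
variable {n : ℕ} (E : EdgeIdx n → Bool) (σ : Equiv.Perm (Fin n)) (R : ℕ) (u : Fin n)

/-- The children of `v` in the tree structure on the ball. -/
def CSet (v : Fin n) : Finset (Fin n) :=
  (ballFinset E σ n R u).filter fun c => c ≠ u ∧ paNbr E σ u c = v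

/-- The rooted tree on the ball `B_R^n(u)`. -/
def theTree : BPTree n where
  verts := ballFinset E σ n R u
  root := u
  parent := paNbr E σ u
  dep := fun v => (graphAt E σ n).dist u v
  root_mem := by
    rw [mem_ballFinset]
    exact ⟨SimpleGraph.Reachable.refl u, by simp [SimpleGraph.dist_self]⟩
  dep_root := SimpleGraph.dist_self
  parent_mem := by
    intro v hv hne
    rw [mem_ballFinset] at hv ⊢
    obtain ⟨hr, hd⟩ := hv
    have hs := paNbr_spec (E := E) (σ := σ) (u := u) hr hne
    exact ⟨hr.trans hs.1.symm.reachable, by omega⟩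
  dep_parent := by
    intro v hv hne
    rw [mem_ballFinset] at hv
    have hs := paNbr_spec (E := E) (σ := σ) (u := u) hv.1 hne
    show (graphAt E σ n).dist u v = (graphAt E σ n).dist u (paNbr E σ u v) + 1
    omega

lemma theTree_children (v : Fin n) :
    (theTree E σ R u).children v = CSet E σ R u v := rfl

/-- The descendants of `v` in the tree structure on the ball. -/
def desc (v : Fin n) : Finset (Fin n) :=
  (ballFinset E σ n R u).filter fun x =>
    (graphAt E σ n).dist u v ≤ (graphAt E σ n).dist u x ∧
    (paNbr E σ u)^[(graphAt E σ n).dist u x - (graphAt E σ n).dist u v] x = v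

/-- The last time at which anything in the subtree of `v` (or its parent) arrives. -/
def Atime (v : Fin n) : ℕ :=
  (insert (paNbr E σ u v) (desc E σ R u v)).sup (arrivalTime σ)

variable {E σ R u}

lemma mem_CSet {v c : Fin n} :
    c ∈ CSet E σ R u v ↔ c ∈ ballSet E σ n R u ∧ c ≠ u ∧ paNbr E σ u c = v := by
  simp [CSet]

lemma CSet_adj_dist {v c : Fin n} (hc : c ∈ CSet E σ R u v) :
    (graphAt E σ n).Adj v c ∧
      (graphAt E σ n).dist u c = (graphAt E σ n).dist u v + 1 := by
  rw [mem_CSet] at hc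
  obtain ⟨⟨hr, hd⟩, hne, hpa⟩ := hc
  have hs := paNbr_spec (E := E) (σ := σ) (u := u) hr hne
  rw [hpa] at hs
  exact ⟨hs.1, by omega⟩

lemma mem_desc {v x : Fin n} :
    x ∈ desc E σ R u v ↔ x ∈ ballSet E σ n R u ∧
      (graphAt E σ n).dist u v ≤ (graphAt E σ n).dist u x ∧
      (paNbr E σ u)^[(graphAt E σ n).dist u x - (graphAt E σ n).dist u v] x = v := by
  simp [desc]

lemma self_mem_desc {v : Fin n} (hv : v ∈ ballSet E σ n R u) : v ∈ desc E σ R u v := by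
  rw [mem_desc]
  exact ⟨hv, le_refl _, by simp⟩

lemma desc_ball {v x : Fin n} (hx : x ∈ desc E σ R u v) : x ∈ ballSet E σ n R u :=
  (mem_desc.mp hx).1

lemma desc_trans {v x z : Fin n} (hx : x ∈ desc E σ R u v) (hz : z ∈ desc E σ R u x) :
    z ∈ desc E σ R u v := by
  rw [mem_desc] at hx hz ⊢
  obtain ⟨hxb, hx1, hx2⟩ := hx
  obtain ⟨hzb, hz1, hz2⟩ := hz
  refine ⟨hzb, le_trans hx1 hz1, ?_⟩
  have harith : (graphAt E σ n).dist u z - (graphAt E σ n).dist u v =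
      ((graphAt E σ n).dist u x - (graphAt E σ n).dist u v) +
      ((graphAt E σ n).dist u z - (graphAt E σ n).dist u x) := by omega
  rw [harith, Function.iterate_add_apply, hz2, hx2]

lemma child_mem_desc {v c : Fin n} (hc : c ∈ CSet E σ R u v) : c ∈ desc E σ R u v := by
  have hd := (CSet_adj_dist hc).2
  rw [mem_CSet] at hc
  rw [mem_desc]
  refine ⟨hc.1, by omega, ?_⟩
  have : (graphAt E σ n).dist u c - (graphAt E σ n).dist u v = 1 := by omega
  rw [this, Function.iterate_one, hc.2.2]

lemma desc_dist_lt {v x : Fin n} (hx : x ∈ desc E σ R u v) (hne : x ≠ v) :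
    (graphAt E σ n).dist u v < (graphAt E σ n).dist u x := by
  rw [mem_desc] at hx
  rcases Nat.lt_or_ge ((graphAt E σ n).dist u v) ((graphAt E σ n).dist u x) with h | h
  · exact h
  · exfalso
    have h0 : (graphAt E σ n).dist u x - (graphAt E σ n).dist u v = 0 := by omega
    rw [h0, Function.iterate_zero_apply] at hx
    exact hne hx.2.2

lemma paNbr_mem_desc {v x : Fin n} (hx : x ∈ desc E σ R u v) (hne : x ≠ v) :
    paNbr E σ u x ∈ desc E σ R u v ∧ (graphAt E σ n).Adj (paNbr E σ u x) x ∧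
      (graphAt E σ n).dist u (paNbr E σ u x) + 1 = (graphAt E σ n).dist u x := by
  have hlt := desc_dist_lt hx hne
  have hxb := desc_ball hx
  rw [mem_desc] at hx
  obtain ⟨⟨hr, hd⟩, hx1, hx2⟩ := hx
  have hxu : x ≠ u := by
    intro h
    rw [h, SimpleGraph.dist_self] at hlt
    omega
  have hs := paNbr_spec (E := E) (σ := σ) (u := u) hr hxu
  refine ⟨?_, hs.1, hs.2⟩
  rw [mem_desc]
  refine ⟨⟨hr.trans hs.1.symm.reachable, by omega⟩, by omega, ?_⟩
  have harith : (graphAt E σ n).dist u (paNbr E σ u x) - (graphAt E σ n).dist u v + 1 =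
      (graphAt E σ n).dist u x - (graphAt E σ n).dist u v := by omega
  calc (paNbr E σ u)^[(graphAt E σ n).dist u (paNbr E σ u x) - (graphAt E σ n).dist u v]
        (paNbr E σ u x)
      = (paNbr E σ u)^[((graphAt E σ n).dist u (paNbr E σ u x) - (graphAt E σ n).dist u v) + 1]
        x := (Function.iterate_succ_apply _ _ _).symm
    _ = (paNbr E σ u)^[(graphAt E σ n).dist u x - (graphAt E σ n).dist u v] x := by
        rw [harith]
    _ = v := hx2

lemma desc_walk {v x : Fin n} (hx : x ∈ desc E σ R u v) :
    ∃ p : (graphAt E σ n).Walk x v,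
      p.length = (graphAt E σ n).dist u x - (graphAt E σ n).dist u v ∧
      ∀ z ∈ p.support, z ∈ desc E σ R u v := by
  generalize hk : (graphAt E σ n).dist u x - (graphAt E σ n).dist u v = k
  induction k generalizing x with
  | zero =>
      have hxv : x = v := by
        have h := mem_desc.mp hx
        rw [hk, Function.iterate_zero_apply] at h
        exact h.2.2
      subst hxv
      refine ⟨Walk.nil, by simp, ?_⟩
      intro z hz
      rw [Walk.support_nil, List.mem_singleton] at hz
      rwa [hz]
  | succ k ih =>
      have hne : x ≠ v := by
        intro h
        subst h
        rw [Nat.sub_self] at hk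
        omega
      obtain ⟨hpa, hadj, hdist⟩ := paNbr_mem_desc hx hne
      have hd1 := desc_dist_lt hx hne
      have hdv := (mem_desc.mp hx).2.1
      have hk' : (graphAt E σ n).dist u (paNbr E σ u x) - (graphAt E σ n).dist u v = k := by
        omega
      obtain ⟨q, hq1, hq2⟩ := ih hpa hk'
      refine ⟨Walk.cons hadj.symm q, ?_, ?_⟩
      · rw [Walk.length_cons]; omega
      · intro z hz
        rw [Walk.support_cons] at hz
        rcases List.mem_cons.mp hz with h | h
        · rwa [h]
        · exact hq2 z h

lemma arr_le_Atime {v x : Fin n} (hx : x ∈ desc E σ R u v) :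
    arrivalTime σ x ≤ Atime E σ R u v :=
  Finset.le_sup (Finset.mem_insert_of_mem hx)

lemma arr_paNbr_le_Atime (v : Fin n) :
    arrivalTime σ (paNbr E σ u v) ≤ Atime E σ R u v :=
  Finset.le_sup (Finset.mem_insert_self _ _)

lemma Atime_le_n (v : Fin n) : Atime E σ R u v ≤ n :=
  Finset.sup_le fun x _ => arrivalTime_le σ x

lemma one_le_Atime {v : Fin n} (hv : v ∈ ballSet E σ n R u) : 1 ≤ Atime E σ R u v :=
  le_trans (arrivalTime_pos σ v) (arr_le_Atime (self_mem_desc hv))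

lemma Atime_child_le {v c : Fin n} (hv : v ∈ ballSet E σ n R u)
    (hc : c ∈ CSet E σ R u v) : Atime E σ R u c ≤ Atime E σ R u v := by
  apply Finset.sup_le
  intro x hx
  rcases Finset.mem_insert.mp hx with h | h
  · subst h
    rw [(mem_CSet.mp hc).2.2]
    exact arr_le_Atime (self_mem_desc hv)
  · exact arr_le_Atime (desc_trans (child_mem_desc hc) h)

lemma CSet_desc_disjoint {v c c' x : Fin n} (hc : c ∈ CSet E σ R u v)
    (hc' : c' ∈ CSet E σ R u v) (hx : x ∈ desc E σ R u c) (hx' : x ∈ desc E σ R u c') :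
    c = c' := by
  have h1 := (CSet_adj_dist hc).2
  have h2 := (CSet_adj_dist hc').2
  rw [mem_desc] at hx hx'
  have : (graphAt E σ n).dist u x - (graphAt E σ n).dist u c =
      (graphAt E σ n).dist u x - (graphAt E σ n).dist u c' := by omega
  rw [this, hx'.2.2] at hx
  exact hx.2.2.symm

lemma depth_lt_card {v : Fin n} :
    (theTree E σ R u).depth < (ballFinset E σ n R u).card := by
  generalize hD : (theTree E σ R u).depth = D
  have hne : (ballFinset E σ n R u).Nonempty :=
    ⟨u, by
      rw [mem_ballFinset]
      exact ⟨SimpleGraph.Reachable.refl u, by simp [SimpleGraph.dist_self]⟩⟩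
  have hchain : ∀ j, j ≤ D → ∃ z ∈ ballFinset E σ n R u,
      (graphAt E σ n).dist u z = D - j := by
    intro j
    induction j with
    | zero =>
        intro _
        obtain ⟨z, hz, hzd⟩ := Finset.exists_mem_eq_sup _ hne (theTree E σ R u).dep
        refine ⟨z, hz, ?_⟩
        rw [Nat.sub_zero, ← hD, BPTree.depth]
        exact hzd.symm
    | succ j ih =>
        intro hj
        obtain ⟨z, hz, hzd⟩ := ih (by omega)
        rw [mem_ballFinset] at hz
        have hzu : z ≠ u := by
          intro h
          rw [h, SimpleGraph.dist_self] at hzd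
          omega
        have hs := paNbr_spec (E := E) (σ := σ) (u := u) hz.1 hzu
        have hd2 : (graphAt E σ n).dist u (paNbr E σ u z) = D - (j+1) := by omega
        have hs2 := hs.2
        have hz2 := hz.2
        have hd3 : (graphAt E σ n).dist u (paNbr E σ u z) ≤ R := by omega
        refine ⟨paNbr E σ u z, ?_, hd2⟩
        rw [mem_ballFinset]
        exact ⟨hz.1.trans hs.1.symm.reachable, hd3⟩
  have hsub : Finset.range (D + 1) ⊆
      (ballFinset E σ n R u).image fun z => (graphAt E σ n).dist u z := by
    intro i hi
    rw [Finset.mem_range] at hi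
    obtain ⟨z, hz, hzd⟩ := hchain (D - i) (by omega)
    rw [Finset.mem_image]
    exact ⟨z, hz, by rw [hzd]; omega⟩
  have h1 := Finset.card_le_card hsub
  have h2 := Finset.card_image_le (s := ballFinset E σ n R u)
    (f := fun z => (graphAt E σ n).dist u z)
  rw [Finset.card_range] at h1
  omega

end TreeDefs

section Classify
variable {n : ℕ} {E : EdgeIdx n → Bool} {σ : Equiv.Perm (Fin n)} {R : ℕ} {u : Fin n}

lemma CSet_eq (htree : ((graphAt E σ n).induce (ballSet E σ n R u)).IsAcyclic)
    {v : Fin n} (hv : v ∈ ballSet E σ n R u)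
    (hdv : (graphAt E σ n).dist u v < R) :
    CSet E σ R u v =
      Finset.univ.filter fun z => (graphAt E σ n).Adj v z ∧ z ≠ paNbr E σ u v := by
  ext z
  simp only [mem_CSet, Finset.mem_filter, Finset.mem_univ, true_and]
  constructor
  · rintro ⟨hzb, hzu, hpz⟩
    have hs := paNbr_spec (E := E) (σ := σ) (u := u) hzb.1 hzu
    rw [hpz] at hs
    refine ⟨hs.1, ?_⟩
    intro hzp
    by_cases hvu : v = u
    · rw [hvu, paNbr_u] at hzp
      exact hzu hzp
    · have hv' : (graphAt E σ n).Reachable u v := hzb.1.trans hs.1.symm.reachable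
      have hs' := paNbr_spec (E := E) (σ := σ) (u := u) hv' hvu
      rw [← hzp] at hs'
      omega
  · rintro ⟨hadj, hne⟩
    have hclass := adj_classify htree hv hdv hadj
    have hrz : (graphAt E σ n).Reachable u z := hv.1.trans hadj.reachable
    rcases hclass with h | h
    · have hzb : z ∈ ballSet E σ n R u := ⟨hrz, by omega⟩
      have hzu : z ≠ u := by
        intro hh
        rw [hh] at h
        rw [SimpleGraph.dist_self] at h
        omega
      have heq := closer_unique htree hzb hzu ⟨hadj, by omega⟩
      exact ⟨hzb, hzu, heq.symm⟩
    · exfalso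
      have hvu : v ≠ u := by
        intro hh
        rw [hh, SimpleGraph.dist_self] at h
        omega
      exact hne (closer_unique htree hv hvu ⟨hadj.symm, h⟩)

lemma filter_adj_eq_CSet (htree : ((graphAt E σ n).induce (ballSet E σ n R u)).IsAcyclic)
    {v : Fin n} (hv : v ∈ ballSet E σ n R u)
    (hdv : (graphAt E σ n).dist u v < R) {s : ℕ}
    (hvs : arrivalTime σ v ≤ s)
    (hcs : ∀ c ∈ CSet E σ R u v, arrivalTime σ c ≤ s) :
    Finset.univ.filter
        (fun z => (graphAt E σ s).Adj v z ∧ z ≠ paNbr E σ u v) =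
      CSet E σ R u v := by
  ext z
  simp only [Finset.mem_filter, Finset.mem_univ, true_and]
  constructor
  · rintro ⟨hadj, hne⟩
    rw [adj_graphAt_iff] at hadj
    rw [CSet_eq htree hv hdv]
    simp only [Finset.mem_filter, Finset.mem_univ, true_and]
    exact ⟨hadj.1, hne⟩
  · intro hz
    have hz' := hz
    rw [CSet_eq htree hv hdv] at hz'
    simp only [Finset.mem_filter, Finset.mem_univ, true_and] at hz'
    refine ⟨?_, hz'.2⟩
    rw [adj_graphAt_iff]
    exact ⟨hz'.1, hvs, hcs z hz⟩

end Classify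

section Dyn
variable {n : ℕ} {a b α : ℝ} {E : EdgeIdx n → Bool} {σ : Equiv.Perm (Fin n)}
  {τ' : Fin n → Fin 2}

lemma msgTraj_succ (a b α : ℝ) (R : ℕ) (E : EdgeIdx n → Bool) (σ : Equiv.Perm (Fin n))
    (τ' : Fin n → Fin 2) {t : ℕ} (ht : t < n) :
    msgTraj a b α R E σ τ' (t+1) =
      afterLayers a b α E σ τ' (t+1) (σ ⟨t, ht⟩) (msgTraj a b α R E σ τ' t) R := by
  rw [msgTraj, dif_pos ht]

lemma afterLayers_eq (a b α : ℝ) (E : EdgeIdx n → Bool) (σ : Equiv.Perm (Fin n))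
    (τ' : Fin n → Fin 2) (t : ℕ) (w : Fin n) (M : Fin n → Fin n → ℝ) (r : ℕ)
    (x y : Fin n) :
    afterLayers a b α E σ τ' t w M r x y =
      if y = w ∧ (graphAt E σ t).Adj x w then bpMsg a b α E σ τ' M (t - 1) x w
      else if (graphAt E σ t).Reachable w y ∧ 1 ≤ (graphAt E σ t).dist w y ∧
          (graphAt E σ t).dist w y ≤ r ∧ x = shortestNbr E σ t w y then
        bpMsg a b α E σ τ'
          (afterLayers a b α E σ τ' t w M ((graphAt E σ t).dist w y - 1)) t x y
      else M x y := by
  induction r with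
  | zero =>
      show stepIncoming a b α E σ τ' t w M x y = _
      rw [stepIncoming]
      by_cases h1 : y = w ∧ (graphAt E σ t).Adj x w
      · rw [if_pos h1, if_pos h1]
      · rw [if_neg h1, if_neg h1, if_neg]
        rintro ⟨-, h2, h3, -⟩
        omega
  | succ r ih =>
      show stepLayer a b α E σ τ' t (r+1) w (afterLayers a b α E σ τ' t w M r) x y = _
      rw [stepLayer]
      by_cases hL : (graphAt E σ t).Reachable w y ∧
          (graphAt E σ t).dist w y = (r+1 : ℕ) ∧ x = shortestNbr E σ t w y
      · rw [if_pos hL]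
        have hyw : ¬(y = w ∧ (graphAt E σ t).Adj x w) := by
          rintro ⟨h1, -⟩
          rw [h1] at hL
          have hds := SimpleGraph.dist_self (G := graphAt E σ t) (v := w)
          omega
        rw [if_neg hyw, if_pos ⟨hL.1, by omega, by omega, hL.2.2⟩, hL.2.1]
        norm_num
      · rw [if_neg hL, ih]
        by_cases h1 : y = w ∧ (graphAt E σ t).Adj x w
        · rw [if_pos h1, if_pos h1]
        · rw [if_neg h1, if_neg h1]
          by_cases h2 : (graphAt E σ t).Reachable w y ∧ 1 ≤ (graphAt E σ t).dist w y ∧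
              (graphAt E σ t).dist w y ≤ r ∧ x = shortestNbr E σ t w y
          · rw [if_pos h2, if_pos ⟨h2.1, h2.2.1, by omega, h2.2.2.2⟩]
          · rw [if_neg h2, if_neg]
            rintro ⟨k1, k2, k3, k4⟩
            rcases Nat.lt_or_ge ((graphAt E σ t).dist w y) (r+1) with hlt | hge
            · exact h2 ⟨k1, k2, by omega, k4⟩
            · exact hL ⟨k1, by omega, k4⟩

lemma shortestNbr_spec {t : ℕ} {w y : Fin n}
    (h : ∃ x, (graphAt E σ t).Adj y x ∧
      (graphAt E σ t).dist w x + 1 = (graphAt E σ t).dist w y) :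
    (graphAt E σ t).Adj y (shortestNbr E σ t w y) ∧
      (graphAt E σ t).dist w (shortestNbr E σ t w y) + 1 =
        (graphAt E σ t).dist w y := by
  rw [shortestNbr, dif_pos h]
  exact h.choose_spec

lemma shortestNbr_exists {t : ℕ} {w y : Fin n}
    (hr : (graphAt E σ t).Reachable w y) (h1 : 1 ≤ (graphAt E σ t).dist w y) :
    ∃ x, (graphAt E σ t).Adj y x ∧
      (graphAt E σ t).dist w x + 1 = (graphAt E σ t).dist w y := by
  apply exists_closer hr
  intro h
  rw [h, SimpleGraph.dist_self] at h1
  omega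

lemma shortestNbr_eq_w {t : ℕ} {w y : Fin n} (hadj : (graphAt E σ t).Adj w y) :
    shortestNbr E σ t w y = w := by
  have hd1 : (graphAt E σ t).dist w y = 1 := SimpleGraph.dist_eq_one_iff_adj.mpr hadj
  have hex := shortestNbr_exists (E := E) (hadj.reachable) (by omega)
  have hs := shortestNbr_spec (E := E) (σ := σ) hex
  have hd0 : (graphAt E σ t).dist w (shortestNbr E σ t w y) = 0 := by omega
  have hre : (graphAt E σ t).Reachable w (shortestNbr E σ t w y) :=
    hadj.reachable.trans hs.1.reachable
  exact ((hre.dist_eq_zero_iff).mp hd0).symm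

/-- All fuels at least the distance give the same message. -/
lemma afterLayers_agree (a b α : ℝ) (E : EdgeIdx n → Bool) (σ : Equiv.Perm (Fin n))
    (τ' : Fin n → Fin 2) (t : ℕ) (w : Fin n) (M : Fin n → Fin n → ℝ)
    {r r' : ℕ} (z x : Fin n) (hr : (graphAt E σ t).dist w x ≤ r)
    (hr' : (graphAt E σ t).dist w x ≤ r') :
    afterLayers a b α E σ τ' t w M r z x = afterLayers a b α E σ τ' t w M r' z x := by
  rw [afterLayers_eq, afterLayers_eq]
  by_cases h1 : x = w ∧ (graphAt E σ t).Adj z w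
  · rw [if_pos h1, if_pos h1]
  · rw [if_neg h1, if_neg h1]
    by_cases h2 : (graphAt E σ t).Reachable w x ∧ 1 ≤ (graphAt E σ t).dist w x ∧
        z = shortestNbr E σ t w x
    · rw [if_pos ⟨h2.1, h2.2.1, hr, h2.2.2⟩, if_pos ⟨h2.1, h2.2.1, hr', h2.2.2⟩]
    · have hn1 : ¬((graphAt E σ t).Reachable w x ∧ 1 ≤ (graphAt E σ t).dist w x ∧
          (graphAt E σ t).dist w x ≤ r ∧ z = shortestNbr E σ t w x) := by
        rintro ⟨k1, k2, k3, k4⟩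
        exact h2 ⟨k1, k2, k4⟩
      have hn2 : ¬((graphAt E σ t).Reachable w x ∧ 1 ≤ (graphAt E σ t).dist w x ∧
          (graphAt E σ t).dist w x ≤ r' ∧ z = shortestNbr E σ t w x) := by
        rintro ⟨k1, k2, k3, k4⟩
        exact h2 ⟨k1, k2, k4⟩
      rw [if_neg hn1, if_neg hn2]

/-- Whenever a message is (re)written during arrival `t+1`, its new value is the BP
update read off the *end-of-arrival* message state. -/
lemma update_value (a b α : ℝ) (R : ℕ) (τ' : Fin n → Fin 2) {t : ℕ} (ht : t < n)
    (x y : Fin n)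
    (htrig : (y = σ ⟨t, ht⟩ ∧ (graphAt E σ (t+1)).Adj x (σ ⟨t, ht⟩)) ∨
      ((graphAt E σ (t+1)).Reachable (σ ⟨t, ht⟩) y ∧
        1 ≤ (graphAt E σ (t+1)).dist (σ ⟨t, ht⟩) y ∧
        (graphAt E σ (t+1)).dist (σ ⟨t, ht⟩) y ≤ R ∧
        x = shortestNbr E σ (t+1) (σ ⟨t, ht⟩) y)) :
    msgTraj a b α R E σ τ' (t+1) x y =
      hSide α (τ' x) +
        ∑ z ∈ Finset.univ.filter
            (fun z => (graphAt E σ (t+1)).Adj x z ∧ z ≠ y),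
          FBP a b (msgTraj a b α R E σ τ' (t+1) z x) := by
  set w := σ ⟨t, ht⟩ with hw
  set M := msgTraj a b α R E σ τ' t with hM
  have hrec : msgTraj a b α R E σ τ' (t+1) =
      afterLayers a b α E σ τ' (t+1) w M R := msgTraj_succ a b α R E σ τ' ht
  have harrw : arrivalTime σ w = t + 1 := arrivalTime_sigma ht
  rcases htrig with ⟨hyw, hadj⟩ | ⟨hre, h1, hR2, hxs⟩
  · -- step-incoming update
    subst hyw
    have hxw : x ≠ w := hadj.ne
    rw [hrec, afterLayers_eq, if_pos ⟨rfl, hadj⟩]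
    rw [bpMsg]
    congr 1
    have hsets : Finset.univ.filter
          (fun z => (graphAt E σ (t + 1 - 1)).Adj x z ∧ z ≠ w) =
        Finset.univ.filter (fun z => (graphAt E σ (t+1)).Adj x z ∧ z ≠ w) := by
      ext z
      simp only [Finset.mem_filter, Finset.mem_univ, true_and, Nat.add_sub_cancel]
      constructor
      · rintro ⟨h2, h3⟩
        exact ⟨graphAt_mono (by omega) h2, h3⟩
      · rintro ⟨h2, h3⟩
        refine ⟨?_, h3⟩
        rw [adj_graphAt_iff] at h2 ⊢
        have hzw : z ≠ w := h3
        have hxarr : arrivalTime σ x ≤ t := by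
          have := (adj_graphAt_iff (t+1)).mp hadj
          have hne : arrivalTime σ x ≠ t + 1 := by
            intro hc
            exact hxw (arrivalTime_inj (hc.trans harrw.symm))
          omega
        have hzarr : arrivalTime σ z ≤ t := by
          have hne : arrivalTime σ z ≠ t + 1 := by
            intro hc
            exact hzw (arrivalTime_inj (hc.trans harrw.symm))
          omega
        exact ⟨h2.1, hxarr, hzarr⟩
    rw [Nat.add_sub_cancel] at hsets ⊢
    rw [hsets]
    apply Finset.sum_congr rfl
    intro z hz
    simp only [Finset.mem_filter, Finset.mem_univ, true_and] at hz
    congr 1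
    -- msgTraj (t+1) z x = M z x
    rw [afterLayers_eq]
    have hb1 : ¬(x = w ∧ (graphAt E σ (t+1)).Adj z w) := by
      rintro ⟨hc, -⟩
      exact hxw hc
    rw [if_neg hb1, if_neg]
    rintro ⟨k1, k2, k3, k4⟩
    have hdwx : (graphAt E σ (t+1)).dist w x = 1 :=
      SimpleGraph.dist_eq_one_iff_adj.mpr hadj.symm
    have := shortestNbr_eq_w (E := E) (σ := σ) hadj.symm
    rw [this] at k4
    exact hz.2 k4
  · -- layered update
    have hyw : y ≠ w := by
      intro hc
      rw [hc, SimpleGraph.dist_self] at h1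
      omega
    have hb1 : ¬(y = w ∧ (graphAt E σ (t+1)).Adj x w) := by
      rintro ⟨hc, -⟩
      exact hyw hc
    obtain ⟨hadjyx, hdwx⟩ := shortestNbr_spec (E := E) (σ := σ)
      (shortestNbr_exists (E := E) hre h1)
    rw [← hxs] at hadjyx hdwx
    rw [hrec, afterLayers_eq, if_neg hb1, if_pos ⟨hre, h1, hR2, hxs⟩]
    rw [bpMsg]
    congr 1
    apply Finset.sum_congr rfl
    intro z hz
    simp only [Finset.mem_filter, Finset.mem_univ, true_and] at hz
    congr 1
    exact afterLayers_agree a b α E σ τ' (t+1) w M z x (by omega) (by omega)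

/-- L3: each arrival either leaves a message unchanged or rewrites it in BP form. -/
lemma msgTraj_step (a b α : ℝ) (R : ℕ) (τ' : Fin n → Fin 2) {t : ℕ} (ht : t < n)
    (x y : Fin n) :
    msgTraj a b α R E σ τ' (t+1) x y = msgTraj a b α R E σ τ' t x y ∨
    msgTraj a b α R E σ τ' (t+1) x y =
      hSide α (τ' x) +
        ∑ z ∈ Finset.univ.filter
            (fun z => (graphAt E σ (t+1)).Adj x z ∧ z ≠ y),
          FBP a b (msgTraj a b α R E σ τ' (t+1) z x) := by
  by_cases htrig : (y = σ ⟨t, ht⟩ ∧ (graphAt E σ (t+1)).Adj x (σ ⟨t, ht⟩)) ∨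
      ((graphAt E σ (t+1)).Reachable (σ ⟨t, ht⟩) y ∧
        1 ≤ (graphAt E σ (t+1)).dist (σ ⟨t, ht⟩) y ∧
        (graphAt E σ (t+1)).dist (σ ⟨t, ht⟩) y ≤ R ∧
        x = shortestNbr E σ (t+1) (σ ⟨t, ht⟩) y)
  · exact Or.inr (update_value a b α R τ' ht x y htrig)
  · rw [not_or] at htrig
    left
    rw [msgTraj_succ a b α R E σ τ' ht, afterLayers_eq, if_neg htrig.1, if_neg htrig.2]

end Dyn

section Trigger
variable {n : ℕ} {E : EdgeIdx n → Bool} {σ : Equiv.Perm (Fin n)} {R : ℕ} {u : Fin n}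

/-- Key geometric fact: when a strict descendant `g` of `v` is the last arrival in
`v`'s subtree, the message `v → pa(v)` is refreshed at `g`'s layered update. -/
lemma trigger_shortest (htree : ((graphAt E σ n).induce (ballSet E σ n R u)).IsAcyclic)
    {v g : Fin n} (hv : v ∈ ballSet E σ n R u) (hvu : v ≠ u)
    (hg : g ∈ desc E σ R u v) (hgv : g ≠ v) {s : ℕ}
    (harr : ∀ x ∈ insert (paNbr E σ u v) (desc E σ R u v), arrivalTime σ x ≤ s)
    (hsn : s ≤ n) :
    (graphAt E σ s).Reachable g (paNbr E σ u v) ∧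
    (graphAt E σ s).dist g (paNbr E σ u v) =
      ((graphAt E σ n).dist u g - (graphAt E σ n).dist u v) + 1 ∧
    shortestNbr E σ s g (paNbr E σ u v) = v := by
  set pav := paNbr E σ u v with hpav
  have hle : graphAt E σ s ≤ graphAt E σ n := graphAt_mono hsn
  have hspec := paNbr_spec (E := E) (σ := σ) (u := u) hv.1 hvu
  rw [← hpav] at hspec
  have hdv1 : 1 ≤ (graphAt E σ n).dist u v := hv.1.pos_dist_of_ne (fun h => hvu h.symm)
  have hgb : g ∈ ballSet E σ n R u := desc_ball hg
  have hk1 : (graphAt E σ n).dist u v < (graphAt E σ n).dist u g := desc_dist_lt hg hgv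
  set k := (graphAt E σ n).dist u g - (graphAt E σ n).dist u v with hk
  -- the tree walk from g up to v, and its transfer to time s
  obtain ⟨p, hplen, hpsup⟩ := desc_walk hg
  have hpsupB : ∀ z ∈ p.support, z ∈ ballSet E σ n R u := fun z hz => desc_ball (hpsup z hz)
  have hpsupdep : ∀ z ∈ p.support,
      (graphAt E σ n).dist u v ≤ (graphAt E σ n).dist u z := fun z hz =>
    (mem_desc.mp (hpsup z hz)).2.1
  have hedges : ∀ e ∈ p.edges, e ∈ (graphAt E σ s).edgeSet := by
    intro e he
    induction e with
    | h x y =>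
      have hadj : (graphAt E σ n).Adj x y := p.edges_subset_edgeSet he
      have hx := p.fst_mem_support_of_mem_edges he
      have hy := p.snd_mem_support_of_mem_edges he
      rw [SimpleGraph.mem_edgeSet, adj_graphAt_iff]
      exact ⟨hadj, harr x (Finset.mem_insert_of_mem (hpsup x hx)),
        harr y (Finset.mem_insert_of_mem (hpsup y hy))⟩
  set p' := p.transfer (graphAt E σ s) hedges with hp'
  have hp'len : p'.length = k := by rw [hp', Walk.length_transfer, hplen]
  have harrv : arrivalTime σ v ≤ s := harr v (Finset.mem_insert_of_mem (self_mem_desc hv))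
  have harrpa : arrivalTime σ pav ≤ s := harr pav (Finset.mem_insert_self _ _)
  have hadjs : (graphAt E σ s).Adj pav v := by
    rw [adj_graphAt_iff]
    exact ⟨hspec.1, harrpa, harrv⟩
  -- walk from g to pav at time s
  set q := p'.concat hadjs.symm with hq
  have hqlen : q.length = k + 1 := by rw [hq, Walk.length_concat, hp'len]
  have hreach : (graphAt E σ s).Reachable g pav := ⟨q⟩
  have hreachgv : (graphAt E σ s).Reachable g v := ⟨p'⟩
  -- distances
  have hdpav : (graphAt E σ n).dist u pav + 1 = (graphAt E σ n).dist u v := hspec.2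
  have hdge : (graphAt E σ n).dist u g ≤
      (graphAt E σ n).dist u v + (graphAt E σ n).dist v g :=
    reachable_dist_triangle hv.1 (hreachgv.symm.mono hle)
  have hdgcomm : (graphAt E σ n).dist v g = (graphAt E σ n).dist g v :=
    SimpleGraph.dist_comm
  have hdsgv_le : (graphAt E σ s).dist g v ≤ k := by
    have := SimpleGraph.dist_le p'
    omega
  have hdngv : k ≤ (graphAt E σ n).dist g v := by omega
  have hdsgv : (graphAt E σ s).dist g v = k := by
    have h1 := dist_le_of_le hle hreachgv
    omega
  have hdgpa : (graphAt E σ n).dist u g ≤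
      (graphAt E σ n).dist u pav + (graphAt E σ n).dist pav g :=
    reachable_dist_triangle (hv.1.trans hspec.1.symm.reachable) (hreach.symm.mono hle)
  have hdgpan : k + 1 ≤ (graphAt E σ n).dist g pav := by
    have := SimpleGraph.dist_comm (G := graphAt E σ n) (u := pav) (v := g)
    omega
  have hdsgpa : (graphAt E σ s).dist g pav = k + 1 := by
    have h1 := SimpleGraph.dist_le q
    have h2 := dist_le_of_le hle hreach
    omega
  refine ⟨hreach, by omega, ?_⟩
  -- now identify the shortest neighbour
  have hex : ∃ x, (graphAt E σ s).Adj pav x ∧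
      (graphAt E σ s).dist g x + 1 = (graphAt E σ s).dist g pav := by
    exact ⟨v, hadjs, by omega⟩
  obtain ⟨hx'adj, hx'dist⟩ := shortestNbr_spec (E := E) (σ := σ) hex
  set x' := shortestNbr E σ s g pav with hx'
  have hdsx' : (graphAt E σ s).dist g x' = k := by omega
  have hx'adjn : (graphAt E σ n).Adj pav x' := ((adj_graphAt_iff s).mp hx'adj).1
  have hreachsx' : (graphAt E σ s).Reachable g x' := by
    apply SimpleGraph.Reachable.of_dist_ne_zero
    omega
  have hdnx'_le : (graphAt E σ n).dist g x' ≤ k := by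
    have := dist_le_of_le hle hreachsx'
    omega
  have hrupav : (graphAt E σ n).Reachable u pav := hv.1.trans hspec.1.symm.reachable
  have hrux' : (graphAt E σ n).Reachable u x' := hrupav.trans hx'adjn.reachable
  have hdx'ub : (graphAt E σ n).dist u x' ≤ (graphAt E σ n).dist u v := by
    have h1 := reachable_dist_triangle hrupav hx'adjn.reachable
    have h2 : (graphAt E σ n).dist pav x' = 1 := SimpleGraph.dist_eq_one_iff_adj.mpr hx'adjn
    omega
  have hdx'lb : (graphAt E σ n).dist u v ≤ (graphAt E σ n).dist u x' := by
    have h1 := reachable_dist_triangle hrux' (hreachsx'.symm.mono hle)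
    have h2 := SimpleGraph.dist_comm (G := graphAt E σ n) (u := x') (v := g)
    omega
  have hdnx' : (graphAt E σ n).dist g x' = k := by
    have h1 : (graphAt E σ n).dist u g ≤
        (graphAt E σ n).dist u x' + (graphAt E σ n).dist x' g :=
      reachable_dist_triangle hrux' ((hreachsx'.mono hle).symm)
    have h2 := SimpleGraph.dist_comm (G := graphAt E σ n) (u := x') (v := g)
    omega
  have hreachngx' : (graphAt E σ n).Reachable g x' := hreachsx'.mono hle
  obtain ⟨P, hPpath, hPlen⟩ := hreachngx'.exists_path_of_dist
  rw [hdnx'] at hPlen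
  -- support of the geodesic `P` lies in the ball, strictly below `pav`
  have hPdep : ∀ z ∈ P.support, (graphAt E σ n).dist u v ≤ (graphAt E σ n).dist u z ∧
      (graphAt E σ n).dist u z ≤ R := by
    intro z hz
    have hsplit := dist_add_dist_le_of_mem_support P hz
    rw [hPlen] at hsplit
    have hrz : (graphAt E σ n).Reachable g z := ⟨P.takeUntil z hz⟩
    have hruz : (graphAt E σ n).Reachable u z := hgb.1.trans hrz
    have h1 : (graphAt E σ n).dist u g ≤
        (graphAt E σ n).dist u z + (graphAt E σ n).dist z g :=
      reachable_dist_triangle hruz hrz.symm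
    have h2 : (graphAt E σ n).dist u z ≤
        (graphAt E σ n).dist u x' + (graphAt E σ n).dist x' z :=
      reachable_dist_triangle hrux' (hrz.symm.trans hreachngx').symm
    have h3 := SimpleGraph.dist_comm (G := graphAt E σ n) (u := z) (v := g)
    have h4 := SimpleGraph.dist_comm (G := graphAt E σ n) (u := x') (v := z)
    have h5 := hgb.2
    constructor <;> omega
  have hPball : ∀ z ∈ P.support, z ∈ ballSet E σ n R u := by
    intro z hz
    exact ⟨hgb.1.trans ⟨P.takeUntil z hz⟩, (hPdep z hz).2⟩
  have hpavP : pav ∉ P.support := by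
    intro hmem
    have := (hPdep pav hmem).1
    omega
  have hpavp : pav ∉ p.support := by
    intro hmem
    have := hpsupdep pav hmem
    omega
  -- `p` is a geodesic in `G(n)`, hence a path
  have hppath : p.IsPath := by
    apply p.isPath_of_length_eq_dist
    have h1 := SimpleGraph.dist_le p
    omega
  -- two paths from `pav` to `g` with support in the ball
  have hW1path : (Walk.cons hspec.1 p.reverse : (graphAt E σ n).Walk pav g).IsPath := by
    rw [Walk.cons_isPath_iff]
    exact ⟨hppath.reverse, by simpa using hpavp⟩
  have hW2path : (Walk.cons hx'adjn P.reverse : (graphAt E σ n).Walk pav g).IsPath := by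
    rw [Walk.cons_isPath_iff]
    exact ⟨hPpath.reverse, by simpa using hpavP⟩
  have hpavball : pav ∈ ballSet E σ n R u := ⟨hrupav, by have := hv.2; omega⟩
  have hsub1 : ∀ z ∈ (Walk.cons hspec.1 p.reverse : (graphAt E σ n).Walk pav g).support,
      z ∈ ballSet E σ n R u := by
    intro z hz
    rw [Walk.support_cons] at hz
    rcases List.mem_cons.mp hz with h | h
    · subst h; exact hpavball
    · exact hpsupB z (by simpa using h)
  have hsub2 : ∀ z ∈ (Walk.cons hx'adjn P.reverse : (graphAt E σ n).Walk pav g).support,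
      z ∈ ballSet E σ n R u := by
    intro z hz
    rw [Walk.support_cons] at hz
    rcases List.mem_cons.mp hz with h | h
    · subst h; exact hpavball
    · exact hPball z (by simpa using h)
  have heqW := walk_unique_in_ball htree _ _ hW1path hW2path hsub1 hsub2
  have hsup := congrArg Walk.support heqW
  rw [Walk.support_cons, Walk.support_cons, Walk.support_eq_cons p.reverse,
    Walk.support_eq_cons P.reverse] at hsup
  simp only [List.cons.injEq, true_and, and_true] at hsup
  exact hsup.1.symm

end Trigger

section Persist
variable {n : ℕ} {a b α : ℝ} {E : EdgeIdx n → Bool} {σ : Equiv.Perm (Fin n)}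
  {τ' : Fin n → Fin 2} {R : ℕ} {u : Fin n}
variable (htree : ((graphAt E σ n).induce (ballSet E σ n R u)).IsAcyclic)
include htree

lemma persist_base {v : Fin n} (hv : v ∈ ballSet E σ n R u) (hvu : v ≠ u)
    (hdv : (graphAt E σ n).dist u v < R) :
    msgTraj a b α R E σ τ' (Atime E σ R u v) v (paNbr E σ u v) =
      hSide α (τ' v) + ∑ c ∈ CSet E σ R u v,
        FBP a b (msgTraj a b α R E σ τ' (Atime E σ R u v) c v) := by
  set pav := paNbr E σ u v with hpav
  set t₀ := Atime E σ R u v with ht₀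
  have ht1 : 1 ≤ t₀ := one_le_Atime hv
  have htn : t₀ ≤ n := Atime_le_n v
  have harr : ∀ x ∈ insert (paNbr E σ u v) (desc E σ R u v), arrivalTime σ x ≤ t₀ :=
    fun x hx => Finset.le_sup hx
  obtain ⟨g, hgmem, hgarr⟩ :=
    Finset.exists_mem_eq_sup (insert (paNbr E σ u v) (desc E σ R u v))
      ⟨paNbr E σ u v, Finset.mem_insert_self _ _⟩ (arrivalTime σ)
  obtain ⟨t1, ht1'⟩ : ∃ t1, t₀ = t1 + 1 := ⟨t₀ - 1, by omega⟩
  have ht1n : t1 < n := by omega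
  have hwg : σ ⟨t1, ht1n⟩ = g := by
    apply arrivalTime_inj (σ := σ)
    rw [arrivalTime_sigma ht1n, ← ht1', ht₀]
    exact hgarr
  have hspec := paNbr_spec (E := E) (σ := σ) (u := u) hv.1 hvu
  rw [← hpav] at hspec
  have hdv1 : 1 ≤ (graphAt E σ n).dist u v := hv.1.pos_dist_of_ne (fun h => hvu h.symm)
  have harrv : arrivalTime σ v ≤ t₀ :=
    harr v (Finset.mem_insert_of_mem (self_mem_desc hv))
  have harrpa : arrivalTime σ pav ≤ t₀ := harr pav (Finset.mem_insert_self _ _)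
  have hadjt : (graphAt E σ t₀).Adj pav v := by
    rw [adj_graphAt_iff]
    exact ⟨hspec.1, harrpa, harrv⟩
  have htrig : (pav = σ ⟨t1, ht1n⟩ ∧ (graphAt E σ (t1+1)).Adj v (σ ⟨t1, ht1n⟩)) ∨
      ((graphAt E σ (t1+1)).Reachable (σ ⟨t1, ht1n⟩) pav ∧
        1 ≤ (graphAt E σ (t1+1)).dist (σ ⟨t1, ht1n⟩) pav ∧
        (graphAt E σ (t1+1)).dist (σ ⟨t1, ht1n⟩) pav ≤ R ∧
        v = shortestNbr E σ (t1+1) (σ ⟨t1, ht1n⟩) pav) := by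
    rw [hwg, ← ht1']
    rcases Finset.mem_insert.mp hgmem with hgpa | hgdesc
    · left
      rw [hgpa, ← hpav]
      exact ⟨rfl, hadjt.symm⟩
    · by_cases hgveq : g = v
      · right
        subst hgveq
        have hd1 : (graphAt E σ t₀).dist g pav = 1 :=
          SimpleGraph.dist_eq_one_iff_adj.mpr hadjt.symm
        refine ⟨hadjt.symm.reachable, by rw [hd1], by rw [hd1]; omega, ?_⟩
        exact (shortestNbr_eq_w (E := E) (σ := σ) hadjt.symm).symm
      · right
        obtain ⟨hre, hd, hshort⟩ := trigger_shortest htree hv hvu hgdesc hgveq harr htn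
        rw [← hpav] at hre hd hshort
        have hgball : g ∈ ballSet E σ n R u := desc_ball hgdesc
        have hkk : (graphAt E σ n).dist u v < (graphAt E σ n).dist u g :=
          desc_dist_lt hgdesc hgveq
        have hgR : (graphAt E σ n).dist u g ≤ R := hgball.2
        exact ⟨hre, by omega, by omega, hshort.symm⟩
  have hval := update_value (E := E) (σ := σ) a b α R τ' ht1n v pav htrig
  rw [← ht1'] at hval
  rw [hval]
  congr 1
  have hsets := filter_adj_eq_CSet htree hv hdv (s := t₀) harrv
    (fun c hc => harr c (Finset.mem_insert_of_mem (child_mem_desc hc)))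
  rw [← hpav] at hsets
  rw [hsets]

lemma persist {v : Fin n} (hv : v ∈ ballSet E σ n R u) (hvu : v ≠ u)
    (hdv : (graphAt E σ n).dist u v < R) :
    ∀ t, Atime E σ R u v ≤ t → t ≤ n → ∃ s, Atime E σ R u v ≤ s ∧ s ≤ t ∧
      msgTraj a b α R E σ τ' t v (paNbr E σ u v) =
        hSide α (τ' v) + ∑ c ∈ CSet E σ R u v,
          FBP a b (msgTraj a b α R E σ τ' s c v) := by
  intro t
  induction t with
  | zero =>
      intro h0 _
      have := one_le_Atime (E := E) (σ := σ) (R := R) (u := u) hv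
      omega
  | succ t ih =>
      intro hA hn1
      by_cases hAt : Atime E σ R u v = t + 1
      · refine ⟨t + 1, by omega, le_refl _, ?_⟩
        rw [← hAt]
        exact persist_base htree hv hvu hdv
      · have hA' : Atime E σ R u v ≤ t := by omega
        have ht : t < n := by omega
        rcases msgTraj_step (E := E) (σ := σ) a b α R τ' ht v (paNbr E σ u v) with h | h
        · obtain ⟨s, hs1, hs2, hs3⟩ := ih hA' (by omega)
          exact ⟨s, hs1, by omega, by rw [h]; exact hs3⟩
        · refine ⟨t + 1, by omega, le_refl _, ?_⟩
          rw [h]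
          congr 1
          have harrv : arrivalTime σ v ≤ t + 1 :=
            le_trans (arr_le_Atime (self_mem_desc hv)) (by omega)
          have hsets := filter_adj_eq_CSet htree hv hdv (s := t+1) harrv
            (fun c hc => le_trans (arr_le_Atime (child_mem_desc hc)) (by omega))
          rw [hsets]

end Persist

section Key
variable {n : ℕ} {a b α : ℝ} {E : EdgeIdx n → Bool} {σ : Equiv.Perm (Fin n)}
  {τ' : Fin n → Fin 2} {R : ℕ} {u : Fin n}

lemma mtilde_congr (inp₁ inp₂ : Fin n → ℝ) :
    ∀ (f : ℕ) (v : Fin n), v ∈ ballSet E σ n R u →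
      (∀ z ∈ desc E σ R u v, inp₁ z = inp₂ z) →
      MtildeAux (theTree E σ R u) a b α τ' inp₁ f v =
        MtildeAux (theTree E σ R u) a b α τ' inp₂ f v := by
  intro f
  induction f with
  | zero =>
      intro v hv hagree
      exact hagree v (self_mem_desc hv)
  | succ f ih =>
      intro v hv hagree
      simp only [MtildeAux]
      by_cases hc : (theTree E σ R u).children v = ∅
      · rw [if_pos hc, if_pos hc]
        exact hagree v (self_mem_desc hv)
      · rw [if_neg hc, if_neg hc]
        congr 1
        apply Finset.sum_congr rfl
        intro c hcmem
        rw [theTree_children] at hcmem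
        congr 1
        exact ih c (mem_CSet.mp hcmem).1
          (fun z hz => hagree z (desc_trans (child_mem_desc hcmem) hz))

lemma key (htree : ((graphAt E σ n).induce (ballSet E σ n R u)).IsAcyclic) :
    ∀ (k : ℕ) (v : Fin n), v ∈ ballSet E σ n R u → v ≠ u →
      R - (graphAt E σ n).dist u v ≤ k →
      ∀ t, Atime E σ R u v ≤ t → t ≤ n →
        ∃ tf : Fin n → ℕ, (∀ x, tf x ∈ Finset.Icc 1 n) ∧
          ∀ f, (theTree E σ R u).depth - (graphAt E σ n).dist u v ≤ f →
            MtildeAux (theTree E σ R u) a b α τ'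
              (fun z => msgTraj a b α R E σ τ' (tf z) z (paNbr E σ u z)) f v =
              msgTraj a b α R E σ τ' t v (paNbr E σ u v) := by
  intro k
  induction k with
  | zero =>
      intro v hv hvu hk t htA htn
      by_cases hc : CSet E σ R u v = ∅
      · -- leaf
        refine ⟨fun _ => t, ?_, ?_⟩
        · intro x
          rw [Finset.mem_Icc]
          exact ⟨le_trans (one_le_Atime hv) htA, htn⟩
        · intro f _
          cases f with
          | zero => rfl
          | succ f =>
              simp only [MtildeAux]
              rw [if_pos (by rw [theTree_children]; exact hc)]
      · exfalso
        obtain ⟨c, hcmem⟩ := Finset.nonempty_of_ne_empty hc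
        have hcd := (CSet_adj_dist hcmem).2
        have hcball : c ∈ ballSet E σ n R u := (mem_CSet.mp hcmem).1
        have := hcball.2
        omega
  | succ k ih =>
      intro v hv hvu hk t htA htn
      by_cases hc : CSet E σ R u v = ∅
      · -- leaf (same as above)
        refine ⟨fun _ => t, ?_, ?_⟩
        · intro x
          rw [Finset.mem_Icc]
          exact ⟨le_trans (one_le_Atime hv) htA, htn⟩
        · intro f _
          cases f with
          | zero => rfl
          | succ f =>
              simp only [MtildeAux]
              rw [if_pos (by rw [theTree_children]; exact hc)]
      · -- interior vertex
        obtain ⟨c₀, hc₀⟩ := Finset.nonempty_of_ne_empty hc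
        have hc₀d := (CSet_adj_dist hc₀).2
        have hc₀ball : c₀ ∈ ballSet E σ n R u := (mem_CSet.mp hc₀).1
        have hdvR : (graphAt E σ n).dist u v < R := by
          have := hc₀ball.2
          omega
        obtain ⟨s, hs1, hs2, hs3⟩ := persist htree hv hvu hdvR t htA htn
        have hchoice : ∀ c ∈ CSet E σ R u v,
            ∃ tf : Fin n → ℕ, (∀ x, tf x ∈ Finset.Icc 1 n) ∧
              ∀ f, (theTree E σ R u).depth - (graphAt E σ n).dist u c ≤ f →
                MtildeAux (theTree E σ R u) a b α τ'
                  (fun z => msgTraj a b α R E σ τ' (tf z) z (paNbr E σ u z)) f c =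
                  msgTraj a b α R E σ τ' s c (paNbr E σ u c) := by
          intro c hcm
          have hcball : c ∈ ballSet E σ n R u := (mem_CSet.mp hcm).1
          have hcd := (CSet_adj_dist hcm).2
          exact ih c hcball (mem_CSet.mp hcm).2.1 (by omega) s
            (le_trans (Atime_child_le hv hcm) hs1) (le_trans hs2 htn)
        choose F hF1 hF2 using hchoice
        have hn1 : 1 ≤ n := u.pos
        refine ⟨fun x => if h : ∃ c, c ∈ CSet E σ R u v ∧ x ∈ desc E σ R u c
            then F h.choose h.choose_spec.1 x else n, ?_, ?_⟩
        · intro x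
          by_cases h : ∃ c, c ∈ CSet E σ R u v ∧ x ∈ desc E σ R u c
          · simp only [dif_pos h]
            exact hF1 h.choose h.choose_spec.1 x
          · simp only [dif_neg h]
            rw [Finset.mem_Icc]
            omega
        · intro f hf
          have hDge : (graphAt E σ n).dist u c₀ ≤ (theTree E σ R u).depth := by
            rw [BPTree.depth]
            apply Finset.le_sup (f := (theTree E σ R u).dep)
            show c₀ ∈ ballFinset E σ n R u
            rw [mem_ballFinset]
            exact hc₀ball
          cases f with
          | zero => omega
          | succ f =>
              simp only [MtildeAux]
              rw [if_neg (by rw [theTree_children]; exact Finset.nonempty_iff_ne_empty.mp ⟨c₀, hc₀⟩)]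
              rw [hs3]
              congr 1
              rw [theTree_children]
              apply Finset.sum_congr rfl
              intro c hcm
              congr 1
              have hpac : paNbr E σ u c = v := (mem_CSet.mp hcm).2.2
              have hagree : ∀ z ∈ desc E σ R u c,
                  msgTraj a b α R E σ τ'
                    ((fun x => if h : ∃ c', c' ∈ CSet E σ R u v ∧ x ∈ desc E σ R u c'
                      then F h.choose h.choose_spec.1 x else n) z) z (paNbr E σ u z) =
                  msgTraj a b α R E σ τ' (F c hcm z) z (paNbr E σ u z) := by
                intro z hz
                have hex : ∃ c', c' ∈ CSet E σ R u v ∧ z ∈ desc E σ R u c' := ⟨c, hcm, hz⟩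
                simp only [dif_pos hex]
                have hcc : hex.choose = c :=
                  CSet_desc_disjoint hex.choose_spec.1 hcm hex.choose_spec.2 hz
                have hFeq : F hex.choose hex.choose_spec.1 z = F c hcm z := by
                  subst hcc
                  rfl
                rw [hFeq]
              rw [mtilde_congr _ _ f c (mem_CSet.mp hcm).1 hagree]
              have hcd := (CSet_adj_dist hcm).2
              rw [hF2 c hcm f (by omega), hpac]

end Key
end AuxDev
/-- **Streaming BP output as tree BP with delayed inputs (Lemma 9).**
Run the `R`-local streaming BP algorithm (log-likelihood-ratio form, `k = 2`) on a
realization of `StSSBM(n,2,a,b,α)`, and write `M^t = msgTraj … t` for the message state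
before vertex `v(t+1)` arrives.  If the ball `B_R^n(u)` is a tree, then — viewing
`B_R^n(u)` as a tree rooted at `u` (with the parent of each `v ≠ u` being its neighbor
closer to `u`) — there exist random time indices `t(v) ∈ [n]` for the leaves such that
`M_u = Bprop(u; B_R^n(u), {M_v^input = M^{t(v)}_{v→pa(v)} : v ∈ L_{B_R^n(u)}}, τ̃, α, a, b)`. -/
theorem streamBP_eq_bprop_on_ball
    (n : ℕ) (a b α : ℝ) (ha : 0 < a) (hb : 0 < b) (hα0 : 0 < α) (hα1 : α < 1 / 2)
    (R : ℕ) (hR : 0 < R)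
    (E : EdgeIdx n → Bool) (σ : Equiv.Perm (Fin n)) (τ' : Fin n → Fin 2) (u : Fin n)
    (htree : ((graphAt E σ n).induce (ballSet E σ n R u)).IsAcyclic) :
    ∃ T : BPTree n,
      T.verts = ballFinset E σ n R u ∧
      T.root = u ∧
      (∀ v ∈ T.verts, v ≠ u →
        (graphAt E σ n).Adj (T.parent v) v ∧ T.dep v = (graphAt E σ n).dist u v) ∧
      ∃ tf : Fin n → ℕ,
        (∀ v : Fin n, T.isLeaf v → tf v ∈ Finset.Icc 1 n) ∧
        streamBPBelief a b α R E σ τ' u =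
          Bprop T a b α τ'
            (fun v => msgTraj a b α R E σ τ' (tf v) v (T.parent v)) := by
  classical
  have hu : u ∈ ballSet E σ n R u :=
    ⟨SimpleGraph.Reachable.refl u, by simp [SimpleGraph.dist_self]⟩
  have hdu : (graphAt E σ n).dist u u = 0 := SimpleGraph.dist_self
  have hn1 : 1 ≤ n := u.pos
  refine ⟨theTree E σ R u, rfl, rfl, ?_, ?_⟩
  · intro v hv hne
    have hv' : v ∈ ballSet E σ n R u := mem_ballFinset.mp hv
    exact ⟨(paNbr_spec hv'.1 hne).1, rfl⟩
  · have hchoice : ∀ c ∈ CSet E σ R u u, ∃ tf : Fin n → ℕ,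
        (∀ x, tf x ∈ Finset.Icc 1 n) ∧
        ∀ f, (theTree E σ R u).depth - (graphAt E σ n).dist u c ≤ f →
          MtildeAux (theTree E σ R u) a b α τ'
            (fun z => msgTraj a b α R E σ τ' (tf z) z (paNbr E σ u z)) f c =
            msgTraj a b α R E σ τ' n c (paNbr E σ u c) := by
      intro c hcm
      exact key htree R c (mem_CSet.mp hcm).1 (mem_CSet.mp hcm).2.1 (by omega)
        n (Atime_le_n c) (le_refl n)
    choose F hF1 hF2 using hchoice
    refine ⟨fun x => if h : ∃ c, c ∈ CSet E σ R u u ∧ x ∈ desc E σ R u c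
        then F h.choose h.choose_spec.1 x else n, ?_, ?_⟩
    · intro v _
      by_cases h : ∃ c, c ∈ CSet E σ R u u ∧ v ∈ desc E σ R u c
      · simp only [dif_pos h]
        exact hF1 h.choose h.choose_spec.1 v
      · simp only [dif_neg h]
        rw [Finset.mem_Icc]
        omega
    · have hset : Finset.univ.filter (fun z => (graphAt E σ n).Adj u z) =
          CSet E σ R u u := by
        rw [CSet_eq htree hu (by omega)]
        ext z
        simp only [Finset.mem_filter, Finset.mem_univ, true_and]
        constructor
        · intro hadj
          refine ⟨hadj, ?_⟩
          rw [paNbr_u]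
          exact hadj.ne'
        · exact fun h => h.1
      have hchil : (theTree E σ R u).children ((theTree E σ R u).root) =
          CSet E σ R u u := rfl
      rw [streamBPBelief, Bprop, hset, hchil]
      congr 1
      apply Finset.sum_congr rfl
      intro c hcm
      congr 1
      have hcball : c ∈ ballSet E σ n R u := (mem_CSet.mp hcm).1
      have hpac : paNbr E σ u c = u := (mem_CSet.mp hcm).2.2
      have hagree : ∀ z ∈ desc E σ R u c,
          msgTraj a b α R E σ τ'
            ((fun x => if h : ∃ c', c' ∈ CSet E σ R u u ∧ x ∈ desc E σ R u c'
              then F h.choose h.choose_spec.1 x else n) z) z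
            ((theTree E σ R u).parent z) =
          msgTraj a b α R E σ τ' (F c hcm z) z (paNbr E σ u z) := by
        intro z hz
        have hex : ∃ c', c' ∈ CSet E σ R u u ∧ z ∈ desc E σ R u c' := ⟨c, hcm, hz⟩
        simp only [dif_pos hex]
        have hcc : hex.choose = c :=
          CSet_desc_disjoint hex.choose_spec.1 hcm hex.choose_spec.2 hz
        have hFeq : F hex.choose hex.choose_spec.1 z = F c hcm z := by
          subst hcc
          rfl
        rw [hFeq]
        rfl
      have hcard : (theTree E σ R u).depth - (graphAt E σ n).dist u c ≤
          (theTree E σ R u).verts.card := by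
        have := depth_lt_card (E := E) (σ := σ) (R := R) (u := u) (v := u)
        have h2 : (theTree E σ R u).verts.card = (ballFinset E σ n R u).card := rfl
        omega
      rw [mtilde_congr _ _ ((theTree E σ R u).verts.card) c hcball hagree,
        hF2 c hcm _ hcard, hpac]
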